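/- (Proposition 1, linear-mixing part.) Let H : (n,f,t) ∈ {1..N_an}×{1..N_sc}×{1..N_sym} → (Ω → ℂ) and W : (n,k,l) ∈ {1..N_an}×{1..K_de}×{1..K_do} → (Ω → ℂ) be square-integrable complex random variables such that the combined family of all entries of H and W is mutually independent. Write Ĥ, Ŵ for the entrywise means and Var H[n,f,t], Var W[n,k,l] for the entrywise variances E|·−mean|². Fix Δf̄ > 0 and ΔT̄ > 0, and for τ ∈ ℝ^{K_de}, ν ∈ ℝ^{K_do} define the steering matrices B(τ) ∈ ℂ^{N_sc×K_de} with [B(τ)]_{f,k} = exp(−2πi (f−1) Δf̄ τ_k) and C(ν) ∈ ℂ^{N_sym×K_do} with [C(ν)]_{t,l} = exp(2πi (t−1) ΔT̄ ν_l). Then for all τ, ν: E‖ H − W ×₂ B(τ) ×₃ C(ν) ‖_F² = ‖ Ĥ − Ŵ ×₂ B(τ) ×₃ C(ν) ‖_F² + Σ_{n,f,t} Var H[n,f,t] + N_sc·N_sym·Σ_{n,k,l} Var W[n,k,l]. In particular, the difference between the expected and the plug-in residual energies is a constant independent of (τ, ν), so maximizing the expected log-likelihood over (τ, ν) is equivalent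 to minimizing ‖ Ĥ − Ŵ ×₂ B(τ) ×₃ C(ν) ‖_F². -/

import Mathlib

open MeasureTheory ProbabilityTheory Finset Real
open scoped MeasureTheory

/-- Delay-domain steering matrix `[B(τ)]_{f,k} = exp(−2πi (f−1) Δf̄ τ_k)`
(with `f` zero-indexed here, so `(f : ℕ)` plays the role of `f − 1`). -/
noncomputable def steerB {Nsc Kde : ℕ} (Δf : ℝ) (τ : Fin Kde → ℝ) :
    Matrix (Fin Nsc) (Fin Kde) ℂ :=
  Matrix.of fun f k =>
    Complex.exp (-(2 * (π : ℂ) * Complex.I * (f : ℕ) * (Δf : ℂ) * (τ k : ℂ)))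

/-- Doppler-domain steering matrix `[C(ν)]_{t,l} = exp(2πi (t−1) ΔT̄ ν_l)`. -/
noncomputable def steerC {Nsym Kdo : ℕ} (ΔT : ℝ) (ν : Fin Kdo → ℝ) :
    Matrix (Fin Nsym) (Fin Kdo) ℂ :=
  Matrix.of fun t l =>
    Complex.exp (2 * (π : ℂ) * Complex.I * (t : ℕ) * (ΔT : ℂ) * (ν l : ℂ))

section Aux

variable {Ω : Type*} [MeasureSpace Ω] [IsProbabilityMeasure (ℙ : Measure Ω)]

private lemma normsq_complex (z : ℂ) : ‖z‖ ^ 2 = z.re ^ 2 + z.im ^ 2 := by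
  rw [Complex.sq_norm, Complex.normSq_apply]; ring

private lemma mul_int_of_L2 {f g : Ω → ℝ} (hf : MemLp f 2 ℙ) (hg : MemLp g 2 ℙ) :
    Integrable (fun ω => f ω * g ω) ℙ := by
  exact hf.integrable_mul hg

-- mean-shift identity
private lemma integral_normsq_decomp (Y : Ω → ℂ) (hY : MemLp Y 2 ℙ) :
    ∫ ω, ‖Y ω‖ ^ 2 ∂ℙ
      = ‖∫ ω, Y ω ∂ℙ‖ ^ 2 + ∫ ω, ‖Y ω - ∫ ω', Y ω' ∂ℙ‖ ^ 2 ∂ℙ := by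
  have hint : Integrable Y ℙ := hY.integrable one_le_two
  set μ := ∫ ω, Y ω ∂ℙ with hμ
  have hre : MemLp (fun ω => (Y ω).re) 2 ℙ := hY.re
  have him : MemLp (fun ω => (Y ω).im) 2 ℙ := hY.im
  have hrei : ∫ ω, (Y ω).re ∂ℙ = μ.re := integral_re hint
  have himi : ∫ ω, (Y ω).im ∂ℙ = μ.im := integral_im hint
  have hvar : ∀ (f : Ω → ℝ), MemLp f 2 ℙ →
      ∫ ω, (f ω - ∫ ω', f ω' ∂ℙ) ^ 2 ∂ℙ = (∫ ω, f ω ^ 2 ∂ℙ) - (∫ ω, f ω ∂ℙ) ^ 2 := by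
    intro f hf
    have h1 := variance_eq_integral (μ := ℙ) hf.aemeasurable
    have h2 := variance_eq_sub (μ := ℙ) hf
    rw [h2] at h1
    simp only [Pi.pow_apply, Pi.sub_apply] at h1
    rw [← h1]
  have e1 : ∀ ω, ‖Y ω - μ‖ ^ 2
      = ((Y ω).re - ∫ ω', (Y ω').re ∂ℙ) ^ 2 + ((Y ω).im - ∫ ω', (Y ω').im ∂ℙ) ^ 2 := by
    intro ω
    rw [normsq_complex, hrei, himi, Complex.sub_re, Complex.sub_im]
  have e2 : ∀ ω, ‖Y ω‖ ^ 2 = (Y ω).re ^ 2 + (Y ω).im ^ 2 := fun ω => normsq_complex _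
  have ire : Integrable (fun ω => ((Y ω).re - ∫ ω', (Y ω').re ∂ℙ) ^ 2) ℙ := by
    simpa [sub_sq] using (hre.sub (memLp_const (∫ ω', (Y ω').re ∂ℙ))).integrable_sq
  have iim : Integrable (fun ω => ((Y ω).im - ∫ ω', (Y ω').im ∂ℙ) ^ 2) ℙ := by
    simpa [sub_sq] using (him.sub (memLp_const (∫ ω', (Y ω').im ∂ℙ))).integrable_sq
  calc ∫ ω, ‖Y ω‖ ^ 2 ∂ℙ = ∫ ω, ((Y ω).re ^ 2 + (Y ω).im ^ 2) ∂ℙ := by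
        simp_rw [e2]
    _ = (∫ ω, (Y ω).re ^ 2 ∂ℙ) + ∫ ω, (Y ω).im ^ 2 ∂ℙ :=
        integral_add hre.integrable_sq him.integrable_sq
    _ = ‖μ‖ ^ 2 + ∫ ω, ‖Y ω - μ‖ ^ 2 ∂ℙ := by
        simp_rw [e1]
        rw [integral_add ire iim, hvar _ hre, hvar _ him, hrei, himi, normsq_complex μ]
        ring

private lemma integral_normsq_sum {ι : Type*} [Fintype ι]
    (Z : ι → Ω → ℂ) (hZ : ∀ i, MemLp (Z i) 2 ℙ)
    (h0 : ∀ i, ∫ ω, Z i ω ∂ℙ = 0)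
    (hind : ∀ i j, i ≠ j → IndepFun (Z i) (Z j) ℙ) :
    ∫ ω, ‖∑ i, Z i ω‖ ^ 2 ∂ℙ = ∑ i, ∫ ω, ‖Z i ω‖ ^ 2 ∂ℙ := by
  have hint : ∀ i, Integrable (Z i) ℙ := fun i => (hZ i).integrable one_le_two
  have hre0 : ∀ i, ∫ ω, (Z i ω).re ∂ℙ = 0 := fun i => by
    have := integral_re (hint i)
    simpa [RCLike.re_to_complex, h0 i] using this
  have him0 : ∀ i, ∫ ω, (Z i ω).im ∂ℙ = 0 := fun i => by
    have := integral_im (hint i)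
    simpa [RCLike.im_to_complex, h0 i] using this
  set g : ι → ι → Ω → ℝ :=
    fun i j ω => (Z i ω).re * (Z j ω).re + (Z i ω).im * (Z j ω).im with hg
  have hgre : ∀ i j, Integrable (fun ω => (Z i ω).re * (Z j ω).re) ℙ := fun i j =>
    mul_int_of_L2 (hZ i).re (hZ j).re
  have hgim : ∀ i j, Integrable (fun ω => (Z i ω).im * (Z j ω).im) ℙ := fun i j =>
    mul_int_of_L2 (hZ i).im (hZ j).im
  have hgi : ∀ i j, Integrable (g i j) ℙ := fun i j => (hgre i j).add (hgim i j)
  have e : ∀ ω, ‖∑ i, Z i ω‖ ^ 2 = ∑ i, ∑ j, g i j ω := by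
    intro ω
    rw [normsq_complex, Complex.re_sum, Complex.im_sum, sq, sq,
      Finset.sum_mul_sum, Finset.sum_mul_sum, ← Finset.sum_add_distrib]
    exact Finset.sum_congr rfl fun i _ => by rw [← Finset.sum_add_distrib]
  calc ∫ ω, ‖∑ i, Z i ω‖ ^ 2 ∂ℙ = ∑ i, ∑ j, ∫ ω, g i j ω ∂ℙ := by
        simp_rw [e]
        rw [integral_finset_sum _ fun i _ => integrable_finset_sum _ fun j _ => hgi i j]
        exact Finset.sum_congr rfl fun i _ => integral_finset_sum _ fun j _ => hgi i j
    _ = ∑ i, ∫ ω, ‖Z i ω‖ ^ 2 ∂ℙ := by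
        refine Finset.sum_congr rfl fun i _ => ?_
        rw [Finset.sum_eq_single i]
        · exact integral_congr_ae (Filter.Eventually.of_forall fun ω => by
            show g i i ω = ‖Z i ω‖ ^ 2
            rw [normsq_complex]; simp [g, sq])
        · intro j _ hji
          have hij : IndepFun (Z i) (Z j) ℙ := hind i j (Ne.symm hji)
          have hijre : IndepFun (fun ω => (Z i ω).re) (fun ω => (Z j ω).re) ℙ :=
            hij.comp Complex.measurable_re Complex.measurable_re
          have hijim : IndepFun (fun ω => (Z i ω).im) (fun ω => (Z j ω).im) ℙ :=
            hij.comp Complex.measurable_im Complex.measurable_im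
          have : ∫ ω, g i j ω ∂ℙ
              = (∫ ω, (Z i ω).re * (Z j ω).re ∂ℙ) + ∫ ω, (Z i ω).im * (Z j ω).im ∂ℙ :=
            integral_add (hgre i j) (hgim i j)
          rw [this,
            hijre.integral_fun_mul_eq_mul_integral ((hint i).re).aestronglyMeasurable
              ((hint j).re).aestronglyMeasurable,
            hijim.integral_fun_mul_eq_mul_integral ((hint i).im).aestronglyMeasurable
              ((hint j).im).aestronglyMeasurable,
            hre0, him0]
          ring
        · intro h
          exact absurd (Finset.mem_univ i) h

private lemma key_decomp {κ : Type*} [Fintype κ] (X : Ω → ℂ) (V : κ → Ω → ℂ) (c : κ → ℂ)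
    (hX : MemLp X 2 ℙ) (hV : ∀ p, MemLp (V p) 2 ℙ)
    (hc : ∀ p, ‖c p‖ = 1)
    (hXV : ∀ p, IndepFun X (V p) ℙ)
    (hVV : ∀ p q, p ≠ q → IndepFun (V p) (V q) ℙ) :
    ∫ ω, ‖X ω - ∑ p, c p * V p ω‖ ^ 2 ∂ℙ
      = ‖(∫ ω, X ω ∂ℙ) - ∑ p, c p * ∫ ω, V p ω ∂ℙ‖ ^ 2
        + (∫ ω, ‖X ω - ∫ ω', X ω' ∂ℙ‖ ^ 2 ∂ℙ)
        + ∑ p, ∫ ω, ‖V p ω - ∫ ω', V p ω' ∂ℙ‖ ^ 2 ∂ℙ := by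
  have hintX : Integrable X ℙ := hX.integrable one_le_two
  have hintV : ∀ p, Integrable (V p) ℙ := fun p => (hV p).integrable one_le_two
  set Y : Ω → ℂ := fun ω => X ω - ∑ p, c p * V p ω with hY
  have hYm : MemLp Y 2 ℙ :=
    hX.sub (memLp_finset_sum univ fun p _ => ((hV p).const_mul (c p)))
  have hIY : ∫ ω, Y ω ∂ℙ = (∫ ω, X ω ∂ℙ) - ∑ p, c p * ∫ ω, V p ω ∂ℙ := by
    rw [hY]
    rw [integral_sub hintX (integrable_finset_sum _ fun p _ => (hintV p).const_mul (c p)),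
      integral_finset_sum _ fun p _ => (hintV p).const_mul (c p)]
    congr 1
    exact Finset.sum_congr rfl fun p _ => integral_const_mul (c p) (V p)
  -- centered family
  set Z : Option κ → Ω → ℂ := fun o =>
    Option.elim o (fun ω => X ω - ∫ ω', X ω' ∂ℙ)
      (fun p ω => -(c p) * (V p ω - ∫ ω', V p ω' ∂ℙ)) with hZ
  have hsum : ∀ ω, Y ω - ∫ ω', Y ω' ∂ℙ = ∑ o : Option κ, Z o ω := by
    intro ω
    rw [Fintype.sum_option, hIY]
    have h1 : ∑ p, Z (some p) ω
        = (∑ p, c p * ∫ ω', V p ω' ∂ℙ) - ∑ p, c p * V p ω := by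
      rw [← Finset.sum_sub_distrib]
      exact Finset.sum_congr rfl fun p _ => by simp [Z]; ring
    rw [h1]
    simp only [Z, Option.elim, hY]
    ring
  have hZm : ∀ o, MemLp (Z o) 2 ℙ := by
    rintro (_ | p)
    · exact hX.sub (memLp_const _)
    · exact ((hV p).sub (memLp_const _)).const_mul _
  have hZ0 : ∀ o, ∫ ω, Z o ω ∂ℙ = 0 := by
    rintro (_ | p)
    · simp only [Z, Option.elim]
      rw [integral_sub hintX (integrable_const _), integral_const]
      simp
    · simp only [Z, Option.elim]
      rw [integral_const_mul]
      rw [integral_sub (hintV p) (integrable_const _), integral_const]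
      simp
  have hZind : ∀ o o', o ≠ o' → IndepFun (Z o) (Z o') ℙ := by
    rintro (_ | p) (_ | q) hne
    · exact absurd rfl hne
    · exact (hXV q).comp (measurable_id.sub measurable_const)
        ((measurable_id.sub measurable_const).const_mul _)
    · exact ((hXV p).symm).comp
        ((measurable_id.sub measurable_const).const_mul _)
        (measurable_id.sub measurable_const)
    · have hpq : p ≠ q := fun h => hne (by rw [h])
      exact (hVV p q hpq).comp
        ((measurable_id.sub measurable_const).const_mul _)
        ((measurable_id.sub measurable_const).const_mul _)
  have main := integral_normsq_decomp Y hYm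
  have hfluct : ∫ ω, ‖Y ω - ∫ ω', Y ω' ∂ℙ‖ ^ 2 ∂ℙ
      = (∫ ω, ‖X ω - ∫ ω', X ω' ∂ℙ‖ ^ 2 ∂ℙ)
        + ∑ p, ∫ ω, ‖V p ω - ∫ ω', V p ω' ∂ℙ‖ ^ 2 ∂ℙ := by
    have h2 : ∫ ω, ‖Y ω - ∫ ω', Y ω' ∂ℙ‖ ^ 2 ∂ℙ = ∫ ω, ‖∑ o : Option κ, Z o ω‖ ^ 2 ∂ℙ :=
      integral_congr_ae (Filter.Eventually.of_forall fun ω => by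
        show ‖Y ω - ∫ ω', Y ω' ∂ℙ‖ ^ 2 = ‖∑ o : Option κ, Z o ω‖ ^ 2
        rw [hsum ω])
    rw [h2, integral_normsq_sum Z hZm hZ0 hZind, Fintype.sum_option]
    congr 1
    refine Finset.sum_congr rfl fun p _ => ?_
    refine integral_congr_ae (Filter.Eventually.of_forall fun ω => ?_)
    show ‖-(c p) * (V p ω - _)‖ ^ 2 = _
    rw [norm_mul, norm_neg, hc, one_mul]
  rw [main, hfluct, hIY]
  ring


private lemma norm_steerB {Nsc Kde : ℕ} (Δf : ℝ) (τ : Fin Kde → ℝ) (f : Fin Nsc) (k : Fin Kde) :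
    ‖steerB (Nsc := Nsc) Δf τ f k‖ = 1 := by
  rw [steerB, Matrix.of_apply]
  have : -(2 * (π : ℂ) * Complex.I * ((f : ℕ) : ℂ) * (Δf : ℂ) * ((τ k : ℝ) : ℂ))
      = ((-(2 * π * (f : ℕ) * Δf * τ k) : ℝ) : ℂ) * Complex.I := by
    push_cast; ring
  rw [this, Complex.norm_exp_ofReal_mul_I]

private lemma norm_steerC {Nsym Kdo : ℕ} (ΔT : ℝ) (ν : Fin Kdo → ℝ) (t : Fin Nsym) (l : Fin Kdo) :
    ‖steerC (Nsym := Nsym) ΔT ν t l‖ = 1 := by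
  rw [steerC, Matrix.of_apply]
  have : 2 * (π : ℂ) * Complex.I * ((t : ℕ) : ℂ) * (ΔT : ℂ) * ((ν l : ℝ) : ℂ)
      = (((2 * π * (t : ℕ) * ΔT * ν l) : ℝ) : ℂ) * Complex.I := by
    push_cast; ring
  rw [this, Complex.norm_exp_ofReal_mul_I]

end Aux

/-- Proposition 1, linear-mixing part: for mutually independent square-integrable
random tensors `H` and `W`,
`E‖H − W ×₂ B(τ) ×₃ C(ν)‖_F² = ‖Ĥ − Ŵ ×₂ B(τ) ×₃ C(ν)‖_F²
  + Σ Var H + N_sc N_sym Σ Var W`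
for all `τ, ν`; the difference between the expected and plug-in residual energies is
a constant independent of `(τ, ν)`. -/
theorem expected_residual_energy_linear_mixing
    {Ω : Type*} [MeasureSpace Ω] [IsProbabilityMeasure (ℙ : Measure Ω)]
    {Nan Nsc Nsym Kde Kdo : ℕ}
    (H : Fin Nan × Fin Nsc × Fin Nsym → Ω → ℂ)
    (W : Fin Nan × Fin Kde × Fin Kdo → Ω → ℂ)
    (hH : ∀ i, MemLp (H i) 2 ℙ) (hW : ∀ j, MemLp (W j) 2 ℙ)
    (hind : iIndepFun (Sum.elim H W) ℙ)
    (Δf ΔT : ℝ) (hΔf : 0 < Δf) (hΔT : 0 < ΔT) :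
    ∀ (τ : Fin Kde → ℝ) (ν : Fin Kdo → ℝ),
      (∫ ω, ∑ n, ∑ f, ∑ t,
          ‖H (n, f, t) ω
            - ∑ k, ∑ l, steerB (Nsc := Nsc) Δf τ f k * steerC (Nsym := Nsym) ΔT ν t l
                * W (n, k, l) ω‖ ^ 2 ∂ℙ)
        = (∑ n, ∑ f, ∑ t,
            ‖(∫ ω, H (n, f, t) ω ∂ℙ)
              - ∑ k, ∑ l, steerB (Nsc := Nsc) Δf τ f k * steerC (Nsym := Nsym) ΔT ν t l
                  * (∫ ω, W (n, k, l) ω ∂ℙ)‖ ^ 2)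
          + (∑ n, ∑ f, ∑ t, ∫ ω, ‖H (n, f, t) ω - ∫ ω', H (n, f, t) ω' ∂ℙ‖ ^ 2 ∂ℙ)
          + (Nsc : ℝ) * (Nsym : ℝ)
            * ∑ n, ∑ k, ∑ l, ∫ ω, ‖W (n, k, l) ω - ∫ ω', W (n, k, l) ω' ∂ℙ‖ ^ 2 ∂ℙ := by
  intro τ ν
  have key : ∀ (n : Fin Nan) (f : Fin Nsc) (t : Fin Nsym),
      ∫ ω, ‖H (n, f, t) ω
          - ∑ k, ∑ l, steerB (Nsc := Nsc) Δf τ f k * steerC (Nsym := Nsym) ΔT ν t l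
              * W (n, k, l) ω‖ ^ 2 ∂ℙ
        = ‖(∫ ω, H (n, f, t) ω ∂ℙ)
            - ∑ k, ∑ l, steerB (Nsc := Nsc) Δf τ f k * steerC (Nsym := Nsym) ΔT ν t l
                * (∫ ω, W (n, k, l) ω ∂ℙ)‖ ^ 2
          + (∫ ω, ‖H (n, f, t) ω - ∫ ω', H (n, f, t) ω' ∂ℙ‖ ^ 2 ∂ℙ)
          + ∑ k, ∑ l, ∫ ω, ‖W (n, k, l) ω - ∫ ω', W (n, k, l) ω' ∂ℙ‖ ^ 2 ∂ℙ := by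
    intro n f t
    have h := key_decomp (X := H (n, f, t))
      (V := fun p : Fin Kde × Fin Kdo => W (n, p.1, p.2))
      (c := fun p : Fin Kde × Fin Kdo =>
        steerB (Nsc := Nsc) Δf τ f p.1 * steerC (Nsym := Nsym) ΔT ν t p.2)
      (hH _) (fun p => hW _)
      (fun p => by rw [norm_mul, norm_steerB, norm_steerC, one_mul])
      (fun p => by
        have := hind.indepFun
          (show (Sum.inl (n, f, t) :
              (Fin Nan × Fin Nsc × Fin Nsym) ⊕ (Fin Nan × Fin Kde × Fin Kdo))
            ≠ Sum.inr (n, p.1, p.2) from Sum.inl_ne_inr)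
        simpa using this)
      (fun p q hpq => by
        have hne : (Sum.inr (n, p.1, p.2) :
              (Fin Nan × Fin Nsc × Fin Nsym) ⊕ (Fin Nan × Fin Kde × Fin Kdo))
            ≠ Sum.inr (n, q.1, q.2) := by
          simp only [ne_eq, Sum.inr.injEq, Prod.mk.injEq, not_and]
          intro _ h1 h2
          exact hpq (Prod.ext h1 h2)
        have := hind.indepFun hne
        simpa using this)
    simp only [Fintype.sum_prod_type] at h
    exact h
  have hYint : ∀ (n : Fin Nan) (f : Fin Nsc) (t : Fin Nsym),
      Integrable (fun ω => ‖H (n, f, t) ω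
          - ∑ k, ∑ l, steerB (Nsc := Nsc) Δf τ f k * steerC (Nsym := Nsym) ΔT ν t l
              * W (n, k, l) ω‖ ^ 2) ℙ := by
    intro n f t
    have hm : MemLp (fun ω => H (n, f, t) ω
        - ∑ k, ∑ l, steerB (Nsc := Nsc) Δf τ f k * steerC (Nsym := Nsym) ΔT ν t l
            * W (n, k, l) ω) 2 ℙ :=
      (hH _).sub (memLp_finset_sum univ fun k _ =>
        memLp_finset_sum univ fun l _ => ((hW _).const_mul _))
    exact (memLp_two_iff_integrable_sq_norm hm.aestronglyMeasurable).mp hm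
  calc (∫ ω, ∑ n, ∑ f, ∑ t,
          ‖H (n, f, t) ω
            - ∑ k, ∑ l, steerB (Nsc := Nsc) Δf τ f k * steerC (Nsym := Nsym) ΔT ν t l
                * W (n, k, l) ω‖ ^ 2 ∂ℙ)
      = ∑ n, ∑ f, ∑ t, ∫ ω,
          ‖H (n, f, t) ω
            - ∑ k, ∑ l, steerB (Nsc := Nsc) Δf τ f k * steerC (Nsym := Nsym) ΔT ν t l
                * W (n, k, l) ω‖ ^ 2 ∂ℙ := by
        rw [integral_finset_sum _ fun n _ => integrable_finset_sum _ fun f _ =>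
          integrable_finset_sum _ fun t _ => hYint n f t]
        refine Finset.sum_congr rfl fun n _ => ?_
        rw [integral_finset_sum _ fun f _ => integrable_finset_sum _ fun t _ => hYint n f t]
        refine Finset.sum_congr rfl fun f _ => ?_
        exact integral_finset_sum _ fun t _ => hYint n f t
    _ = ∑ n, ∑ f, ∑ t,
          (‖(∫ ω, H (n, f, t) ω ∂ℙ)
            - ∑ k, ∑ l, steerB (Nsc := Nsc) Δf τ f k * steerC (Nsym := Nsym) ΔT ν t l
                * (∫ ω, W (n, k, l) ω ∂ℙ)‖ ^ 2
          + (∫ ω, ‖H (n, f, t) ω - ∫ ω', H (n, f, t) ω' ∂ℙ‖ ^ 2 ∂ℙ)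
          + ∑ k, ∑ l, ∫ ω, ‖W (n, k, l) ω - ∫ ω', W (n, k, l) ω' ∂ℙ‖ ^ 2 ∂ℙ) := by
        exact Finset.sum_congr rfl fun n _ => Finset.sum_congr rfl fun f _ =>
          Finset.sum_congr rfl fun t _ => key n f t
    _ = _ := by
        simp only [Finset.sum_add_distrib]
        congr 1
        simp only [Finset.sum_const, Finset.card_univ, Fintype.card_fin, nsmul_eq_mul, smul_eq_mul,
          Finset.mul_sum, Finset.sum_mul]
        exact Finset.sum_congr rfl fun n _ => Finset.sum_congr rfl fun k _ =>
          Finset.sum_congr rfl fun l _ => by ring
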